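/- For the homogeneous totally asymmetric random walk on the ring Z/NZ with rates k(x,x+1) = p > 0, and a strictly positive probability distribution μ on the ring, the potential V solving μ(x) p e^{(V(x+1)-V(x))/2} = μ(x−1) p e^{(V(x)-V(x−1))/2} for all x satisfies (V(x+1)−V(x))/2 = −log μ(x) + (1/N)∑_y log μ(y), and the resulting Donsker-Varadhan functional equals I(μ) = p − pN(∏_{y=1}^N μ(y))^{1/N}. -/

import Mathlib

open Finset

theorem homogeneous_tasep_potential_and_DV (N : ℕ) [NeZero N] (hN : 2 < N)
    (p : ℝ) (hp : 0 < p)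
    (μ : ZMod N → ℝ) (hpos : ∀ x, 0 < μ x) (hsum : ∑ x, μ x = 1)
    (V : ZMod N → ℝ)
    (hV : ∀ x : ZMod N,
      μ x * p * Real.exp ((V (x + 1) - V x) / 2)
        = μ (x - 1) * p * Real.exp ((V x - V (x - 1)) / 2)) :
    (∀ x : ZMod N,
      (V (x + 1) - V x) / 2 = -Real.log (μ x) + (1 / (N : ℝ)) * ∑ y, Real.log (μ y)) ∧
    ∑ x : ZMod N, p * μ x * (1 - Real.exp ((V (x + 1) - V x) / 2))
      = p - p * (N : ℝ) * (∏ y, μ y) ^ ((N : ℝ)⁻¹) := by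
  set f : ZMod N → ℝ := fun x => (V (x + 1) - V x) / 2 with hf
  have hg : ∀ x : ZMod N, μ x * Real.exp (f x) = μ (x - 1) * Real.exp (f (x - 1)) := by
    intro x
    have h := hV x
    have hx1 : (x - 1) + 1 = x := by ring
    have : p * (μ x * Real.exp (f x)) = p * (μ (x - 1) * Real.exp (f (x - 1))) := by
      simp only [hf, hx1]
      linarith [h]
    exact mul_left_cancel₀ hp.ne' this
  have step : ∀ x : ZMod N, μ (x + 1) * Real.exp (f (x + 1)) = μ x * Real.exp (f x) := by
    intro x
    have := hg (x + 1)
    simpa [add_sub_cancel_right] using this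
  have key : ∀ x : ZMod N, μ x * Real.exp (f x) = μ 0 * Real.exp (f 0) := by
    intro x
    obtain ⟨n, rfl⟩ := ZMod.natCast_zmod_surjective (n := N) x
    induction n with
    | zero => simp
    | succ n ih =>
      have : ((n + 1 : ℕ) : ZMod N) = (n : ZMod N) + 1 := by push_cast; ring
      rw [this, step]
      exact ih
  have hsumf : ∑ x : ZMod N, f x = 0 := by
    have hshift : ∑ x : ZMod N, V (x + 1) = ∑ x : ZMod N, V x :=
      Fintype.sum_equiv (Equiv.addRight 1) _ _ (fun x => rfl)
    simp only [hf]
    rw [← Finset.sum_div, Finset.sum_sub_distrib, hshift]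
    simp
  set c : ℝ := μ 0 * Real.exp (f 0) with hc
  have hcpos : 0 < c := mul_pos (hpos 0) (Real.exp_pos _)
  have hfx : ∀ x : ZMod N, f x = Real.log c - Real.log (μ x) := by
    intro x
    have h1 : Real.exp (f x) = c / μ x := by
      rw [eq_div_iff (hpos x).ne', ← key x]; ring
    have := congrArg Real.log h1
    rw [Real.log_exp, Real.log_div hcpos.ne' (hpos x).ne'] at this
    exact this
  set S : ℝ := ∑ y, Real.log (μ y) with hS
  have hcard : (Fintype.card (ZMod N) : ℝ) = (N : ℝ) := by rw [ZMod.card]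
  have hNne : (N : ℝ) ≠ 0 := by
    exact_mod_cast Nat.pos_of_ne_zero (NeZero.ne N) |>.ne'
  have hlogc : Real.log c = S / N := by
    have h0 : ∑ x : ZMod N, f x = (N : ℝ) * Real.log c - S := by
      simp only [hfx]
      rw [Finset.sum_sub_distrib, Finset.sum_const, nsmul_eq_mul, ← hS, Finset.card_univ, ZMod.card]
    rw [hsumf] at h0
    field_simp
    linarith
  have part1 : ∀ x : ZMod N, f x = -Real.log (μ x) + (1 / (N : ℝ)) * S := by
    intro x
    rw [hfx x, hlogc]
    ring
  refine ⟨part1, ?_⟩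
  have hcval : c = (∏ y, μ y) ^ ((N : ℝ)⁻¹) := by
    have hprodpos : 0 < ∏ y, μ y := Finset.prod_pos (fun y _ => hpos y)
    rw [Real.rpow_def_of_pos hprodpos, Real.log_prod (fun y _ => (hpos y).ne'), ← hS]
    rw [← Real.exp_log hcpos, hlogc]
    field_simp
  have : ∑ x : ZMod N, p * μ x * (1 - Real.exp (f x))
      = p * (∑ x : ZMod N, μ x) - p * ∑ x : ZMod N, (μ x * Real.exp (f x)) := by
    rw [Finset.mul_sum, Finset.mul_sum, ← Finset.sum_sub_distrib]
    congr 1; ext x; ring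
  rw [show (∑ x : ZMod N, p * μ x * (1 - Real.exp ((V (x + 1) - V x) / 2)))
      = ∑ x : ZMod N, p * μ x * (1 - Real.exp (f x)) from rfl, this, hsum]
  have hsc : ∑ x : ZMod N, (μ x * Real.exp (f x)) = (N : ℝ) * c := by
    rw [Finset.sum_congr rfl (fun x _ => key x), Finset.sum_const, nsmul_eq_mul, Finset.card_univ, ZMod.card, hc]
  rw [hsc, hcval]
  ring
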